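/- arXiv:2106.03163 — 4 statements merged into one kernel-verified Lean document; each statement's English description precedes it below -/
import Mathlib

section
/- Let D ⊆ D⁺ ⊆ ℝ with D nonempty and sup D⁺ finite. Then for every function T : ℝⁿ → ℝ, every sample x ∈ Dⁿ, and every α ∈ (0,1), the upper confidence bound computed with D is at most the one computed with D⁺: b^α_{D,T}(x) ≤ b^α_{D⁺,T}(x). -/
open MeasureTheory Set

/-- The sorted rearrangement (order statistics) of a finite real vector:
`sortedVec x i` is the (i+1)-st order statistic `x_{(i+1)}` (0-indexed). -/
noncomputable def sortedVec {n : ℕ} (x : Fin n → ℝ) : Fin n → ℝ :=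
  x ∘ ⇑(Tuple.sort x)

/-- The induced mean `m(x, ℓ) = s - ∑ ℓ_{(i)} (x_{(i+1)} - x_{(i)})`, with `x_{(n+1)} := s`. -/
noncomputable def inducedMean {n : ℕ} (s : ℝ) (x ℓ : Fin n → ℝ) : ℝ :=
  s - ∑ i : Fin n, sortedVec ℓ i * ((Fin.snoc (sortedVec x) s : Fin (n+1) → ℝ) i.succ - sortedVec x i)

/-- `S_{D,T}(x) = {y ∈ Dⁿ : T y ≤ T x}`. -/
def SsetD {n : ℕ} (D : Set ℝ) (T : (Fin n → ℝ) → ℝ) (x : Fin n → ℝ) : Set (Fin n → ℝ) :=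
  {y | (∀ i, y i ∈ D) ∧ T y ≤ T x}

/-- `b_{D,T}(x, u) = sup_{z ∈ S_{D,T}(x)} m_{sup D}(z, u)`. -/
noncomputable def bfun {n : ℕ} (D : Set ℝ) (T : (Fin n → ℝ) → ℝ) (x u : Fin n → ℝ) : ℝ :=
  sSup ((fun z => inducedMean (sSup D) z u) '' SsetD D T x)

/-- The uniform probability measure on `[0,1]`. -/
noncomputable def unif01 : Measure ℝ := volume.restrict (Icc (0:ℝ) 1)

/-- The law of an i.i.d. sample of size `n` from Uniform(0,1). -/
noncomputable def unifPi (n : ℕ) : Measure (Fin n → ℝ) := Measure.pi fun _ => unif01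

/-- The `p`-quantile of the random variable `Y` under `μ`:
`Q(p, Y) = inf {y : P(Y ≤ y) ≥ p}`. -/
noncomputable def rquantile {Ω : Type*} [MeasurableSpace Ω] (μ : Measure Ω)
    (Y : Ω → ℝ) (p : ℝ) : ℝ :=
  sInf {y : ℝ | ENNReal.ofReal p ≤ μ {ω | Y ω ≤ y}}

/-- The upper confidence bound `b^α_{D,T}(x) = Q(1 - α, b_{D,T}(x, U))`, `U` i.i.d. Uniform(0,1). -/
noncomputable def ucb {n : ℕ} (D : Set ℝ) (T : (Fin n → ℝ) → ℝ) (α : ℝ)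
    (x : Fin n → ℝ) : ℝ :=
  rquantile (unifPi n) (bfun D T x) (1 - α)

/-- The stairstep function `G_{x,ℓ}` with top value at `s`. -/
noncomputable def stairstep {n : ℕ} (s : ℝ) (x ℓ : Fin n → ℝ) (t : ℝ) : ℝ :=
  if s ≤ t then 1 else sSup ({0} ∪ (sortedVec ℓ '' {i | sortedVec x i ≤ t}))

/-- The `k`-th smallest value (1-indexed) among `m 0, …, m (L-1)`. -/
noncomputable def kthSmallest {L : ℕ} (m : Fin L → ℝ) (k : ℕ) : ℝ :=
  sInf {y : ℝ | k ≤ Nat.card {j : Fin L // m j ≤ y}}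

lemma sortedVec_mono {n : ℕ} (x : Fin n → ℝ) : Monotone (sortedVec x) :=
  Tuple.monotone_sort x

lemma sortedVec_mem {n : ℕ} (x : Fin n → ℝ) {P : ℝ → Prop} (h : ∀ i, P (x i)) (i : Fin n) :
    P (sortedVec x i) := h _

lemma gap_nonneg {n : ℕ} {s : ℝ} {z : Fin n → ℝ} (hz : ∀ i, z i ≤ s) (i : Fin n) :
    sortedVec z i ≤ (Fin.snoc (sortedVec z) s : Fin (n+1) → ℝ) i.succ := by
  by_cases h : (i : ℕ) + 1 < n
  · have : i.succ = Fin.castSucc ⟨(i : ℕ) + 1, h⟩ := by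
      ext; simp
    rw [this, Fin.snoc_castSucc]
    exact sortedVec_mono z (by simp [Fin.le_def])
  · have hn : (i : ℕ) + 1 = n := Nat.le_antisymm i.isLt (not_lt.1 h)
    have : i.succ = Fin.last n := by ext; simp [hn]
    rw [this, Fin.snoc_last]
    exact sortedVec_mem (P := fun t => t ≤ s) z hz i

lemma inducedMean_le {n : ℕ} {s : ℝ} {z u : Fin n → ℝ} (hz : ∀ i, z i ≤ s)
    (hu : ∀ i, 0 ≤ u i) : inducedMean s z u ≤ s := by
  have : (0:ℝ) ≤ ∑ i : Fin n, sortedVec u i *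
      ((Fin.snoc (sortedVec z) s : Fin (n+1) → ℝ) i.succ - sortedVec z i) :=
    Finset.sum_nonneg fun i _ => mul_nonneg (sortedVec_mem (P := fun t => 0 ≤ t) u hu i)
      (sub_nonneg.2 (gap_nonneg hz i))
  simp only [inducedMean]; linarith

lemma inducedMean_ge {n : ℕ} {s : ℝ} {z u : Fin n → ℝ} (hz : ∀ i, z i ≤ s)
    (hu : ∀ i, u i ≤ 1) :
    s - ∑ i : Fin n, ((Fin.snoc (sortedVec z) s : Fin (n+1) → ℝ) i.succ - sortedVec z i)
      ≤ inducedMean s z u := by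
  have : ∑ i : Fin n, sortedVec u i *
      ((Fin.snoc (sortedVec z) s : Fin (n+1) → ℝ) i.succ - sortedVec z i)
      ≤ ∑ i : Fin n, ((Fin.snoc (sortedVec z) s : Fin (n+1) → ℝ) i.succ - sortedVec z i) := by
    refine Finset.sum_le_sum fun i _ => ?_
    have h1 := sortedVec_mem (P := fun t => t ≤ 1) u hu i
    have h2 := sub_nonneg.2 (gap_nonneg hz i)
    nlinarith
  simp only [inducedMean]; linarith

lemma inducedMean_mono_s {n : ℕ} {s s' : ℝ} {z u : Fin n → ℝ} (hss' : s ≤ s')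
    (hu : ∀ i, u i ≤ 1) : inducedMean s z u ≤ inducedMean s' z u := by
  cases n with
  | zero => simp [inducedMean]; linarith
  | succ m =>
    simp only [inducedMean, Fin.sum_univ_castSucc, Fin.succ_castSucc, Fin.snoc_castSucc,
      Fin.succ_last, Fin.snoc_last]
    have h1 : sortedVec u (Fin.last m) ≤ 1 := sortedVec_mem (P := fun t => t ≤ 1) u hu _
    nlinarith

lemma unif01_prob : unif01 (Icc (0:ℝ) 1) = 1 := by
  simp [unif01, Measure.restrict_apply measurableSet_Icc, Real.volume_Icc]

instance : IsProbabilityMeasure unif01 := by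
  constructor
  simp [unif01, Real.volume_Icc]

instance (n : ℕ) : IsProbabilityMeasure (unifPi n) := by
  unfold unifPi; infer_instance

/-- a UCB computed from a superset `D⁺ ⊇ D` (with finite supremum)
is at least the UCB computed from `D`. -/
theorem stmt0 {n : ℕ} (D Dp : Set ℝ) (hD : D.Nonempty) (hsub : D ⊆ Dp)
    (hbdd : BddAbove Dp) :
    ∀ (T : (Fin n → ℝ) → ℝ) (x : Fin n → ℝ), (∀ i, x i ∈ D) →
      ∀ α : ℝ, α ∈ Set.Ioo (0:ℝ) 1 → ucb D T α x ≤ ucb Dp T α x := by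
  intro T x hx α hα
  have hbddD : BddAbove D := hbdd.mono hsub
  have hsD : sSup D ≤ sSup Dp := csSup_le_csSup hbdd hD hsub
  have hle : ∀ z : Fin n → ℝ, (∀ i, z i ∈ D) → ∀ i, z i ≤ sSup D :=
    fun z hz i => le_csSup hbddD (hz i)
  have hlep : ∀ z : Fin n → ℝ, (∀ i, z i ∈ Dp) → ∀ i, z i ≤ sSup Dp :=
    fun z hz i => le_csSup hbdd (hz i)
  have hxD : x ∈ SsetD D T x := ⟨hx, le_refl _⟩
  have hxDp : x ∈ SsetD Dp T x := ⟨fun i => hsub (hx i), le_refl _⟩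
  set μ := unifPi n with hμ
  set G : Set (Fin n → ℝ) := {u | ∀ i, u i ∈ Icc (0:ℝ) 1} with hGdef
  -- bounds on the image sets
  have hbddIm : ∀ (E : Set ℝ), BddAbove E → ∀ u : Fin n → ℝ, (∀ i, 0 ≤ u i) →
      ∀ v ∈ (fun z => inducedMean (sSup E) z u) '' SsetD E T x, v ≤ sSup E := by
    rintro E hE u hu0 v ⟨z, hz, rfl⟩
    exact inducedMean_le (fun i => le_csSup hE (hz.1 i)) hu0
  -- bfun Dp ≤ sSup Dp on G
  have hbfunDp_le : ∀ u ∈ G, bfun Dp T x u ≤ sSup Dp := by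
    intro u hu
    exact csSup_le ⟨_, Set.mem_image_of_mem _ hxDp⟩ (hbddIm Dp hbdd u fun i => (hu i).1)
  -- bfun D ≤ bfun Dp on G
  have hmono : ∀ u ∈ G, bfun D T x u ≤ bfun Dp T x u := by
    intro u hu
    refine csSup_le ⟨_, Set.mem_image_of_mem _ hxD⟩ ?_
    rintro v ⟨z, hz, rfl⟩
    refine le_trans (inducedMean_mono_s hsD (fun i => (hu i).2)) ?_
    exact le_csSup ⟨sSup Dp, hbddIm Dp hbdd u fun i => (hu i).1⟩
      (Set.mem_image_of_mem _ ⟨fun i => hsub (hz.1 i), hz.2⟩)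
  -- lower bound for bfun D on G
  set c : ℝ := sSup D - ∑ i : Fin n,
      ((Fin.snoc (sortedVec x) (sSup D) : Fin (n+1) → ℝ) i.succ - sortedVec x i) with hc
  have hbfunD_ge : ∀ u ∈ G, c ≤ bfun D T x u := by
    intro u hu
    refine le_trans (inducedMean_ge (hle x hx) (fun i => (hu i).2)) ?_
    exact le_csSup ⟨sSup D, hbddIm D hbddD u fun i => (hu i).1⟩
      (Set.mem_image_of_mem _ hxD)
  -- measure facts
  have hGpi : G = Set.pi Set.univ (fun _ : Fin n => Icc (0:ℝ) 1) := by
    ext u; simp [hGdef, Set.mem_pi, Set.mem_Icc, Pi.le_def, forall_and]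
  have hGmeas : MeasurableSet G := by
    rw [hGpi]; exact MeasurableSet.univ_pi fun i => measurableSet_Icc
  have hGfull : μ G = 1 := by
    rw [hGpi, hμ, unifPi, Measure.pi_pi]
    simp [unif01_prob]
  have hGc : μ Gᶜ = 0 := by
    rw [measure_compl hGmeas (by simp), hGfull]
    simp
  have hp0 : (0:ENNReal) < ENNReal.ofReal (1 - α) := ENNReal.ofReal_pos.2 (by linarith [hα.2])
  have hp1 : ENNReal.ofReal (1 - α) ≤ 1 := ENNReal.ofReal_le_one.2 (by linarith [hα.1])
  unfold ucb rquantile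
  refine csInf_le_csInf ?_ ?_ ?_
  · -- BddBelow
    refine ⟨c, ?_⟩
    intro y hy
    by_contra hyc
    push_neg at hyc
    have hsubc : {ω | bfun D T x ω ≤ y} ⊆ Gᶜ := by
      intro u hu
      intro huG
      exact absurd (le_trans (hbfunD_ge u huG) hu) (not_le.2 hyc)
    have : μ {ω | bfun D T x ω ≤ y} = 0 :=
      le_antisymm (le_trans (measure_mono hsubc) hGc.le) bot_le
    rw [Set.mem_setOf_eq, this] at hy
    exact absurd hy (not_le.2 hp0)
  · -- Nonempty
    refine ⟨sSup Dp, ?_⟩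
    have hsubG : G ⊆ {ω | bfun Dp T x ω ≤ sSup Dp} := fun u hu => hbfunDp_le u hu
    calc ENNReal.ofReal (1 - α) ≤ 1 := hp1
      _ = μ G := hGfull.symm
      _ ≤ μ {ω | bfun Dp T x ω ≤ sSup Dp} := measure_mono hsubG
  · -- inclusion
    intro y hy
    rw [Set.mem_setOf_eq] at hy ⊢
    have hsub2 : {ω | bfun Dp T x ω ≤ y} ⊆ {ω | bfun D T x ω ≤ y} ∪ Gᶜ := by
      intro u hu
      by_cases huG : u ∈ G
      · exact Or.inl (le_trans (hmono u huG) hu)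
      · exact Or.inr huG
    calc ENNReal.ofReal (1 - α) ≤ μ {ω | bfun Dp T x ω ≤ y} := hy
      _ ≤ μ ({ω | bfun D T x ω ≤ y} ∪ Gᶜ) := measure_mono hsub2
      _ ≤ μ {ω | bfun D T x ω ≤ y} + μ Gᶜ := measure_union_le _ _
      _ = μ {ω | bfun D T x ω ≤ y} := by rw [hGc, add_zero]
end

section
/- Let s ∈ ℝ, let x ∈ ℝⁿ with order statistics x_{(1)} ≤ … ≤ x_{(n)} ≤ s and x_{(n+1)} := s, and let ℓ ∈ [0,1]ⁿ with order statistics ℓ_{(1)} ≤ … ≤ ℓ_{(n)}. Let X be an integrable real random variable with CDF F such that F(t) ≥ G_{x,ℓ}(t) for all t ∈ ℝ. Then E[X] ≤ s − Σ_{i=1}^n ℓ_{(i)}(x_{(i+1)} − x_{(i)}); that is, the mean of F is at most the mean of the stairstep CDF G_{x,ℓ}. -/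
open MeasureTheory Set

private lemma tele_aux {n : ℕ} (mm : Fin (n+1) → ℝ) (h0 : mm 0 = 0) :
    ∀ (k : ℕ) (hk : k < n),
      ∑ i ∈ Finset.Iic (⟨k, hk⟩ : Fin n), (mm i.succ - mm i.castSucc)
        = mm ⟨k+1, by omega⟩ := by
  intro k
  induction k with
  | zero =>
    intro hk
    have h1 : Finset.Iic (⟨0, hk⟩ : Fin n) = {⟨0, hk⟩} := by
      ext i
      simp only [Finset.mem_Iic, Finset.mem_singleton, Fin.le_def, Fin.ext_iff]
      omega
    rw [h1, Finset.sum_singleton]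
    have h2 : mm (Fin.castSucc ⟨0, hk⟩) = 0 := by
      rw [show Fin.castSucc (⟨0, hk⟩ : Fin n) = 0 from by simp [Fin.ext_iff]]
      exact h0
    rw [h2, sub_zero]
    congr 1
  | succ k ih =>
    intro hk
    have hk' : k < n := by omega
    have hins : Finset.Iic (⟨k+1, hk⟩ : Fin n)
        = insert (⟨k+1, hk⟩ : Fin n) (Finset.Iic ⟨k, hk'⟩) := by
      ext i
      simp only [Finset.mem_Iic, Finset.mem_insert, Fin.le_def, Fin.ext_iff]
      omega
    rw [hins, Finset.sum_insert (by simp [Finset.mem_Iic, Fin.le_def]), ih hk']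
    have h3 : mm (Fin.castSucc (⟨k+1, hk⟩ : Fin n)) = mm ⟨k+1, by omega⟩ := by
      congr 1
    have h4 : Fin.succ (⟨k+1, hk⟩ : Fin n) = ⟨k+2, by omega⟩ := by
      simp [Fin.ext_iff]
    rw [h3, h4]
    ring

private lemma sup_eq_sum {n : ℕ} (w m : Fin n → ℝ) (hw : Monotone w) (hm : Monotone m)
    (hm0 : ∀ i, 0 ≤ m i) (t : ℝ) :
    sSup ({0} ∪ m '' {i | w i ≤ t})
      = ∑ i : Fin n, (Ici (w i)).indicator
          (fun _ => m i - (Fin.cons 0 m : Fin (n+1) → ℝ) i.castSucc) t := by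
  classical
  have hsum : ∑ i : Fin n, (Ici (w i)).indicator
        (fun _ => m i - (Fin.cons 0 m : Fin (n+1) → ℝ) i.castSucc) t
      = ∑ i ∈ Finset.univ.filter (fun i => w i ≤ t),
          (m i - (Fin.cons 0 m : Fin (n+1) → ℝ) i.castSucc) := by
    rw [Finset.sum_filter]
    refine Finset.sum_congr rfl fun i _ => ?_
    by_cases h : w i ≤ t <;> simp [Set.indicator_apply, Set.mem_Ici, h]
  rw [hsum]
  by_cases hA : ∃ i, w i ≤ t
  · obtain ⟨j, hj⟩ := hA
    have hne : (Finset.univ.filter (fun i => w i ≤ t)).Nonempty := ⟨j, by simp [hj]⟩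
    set i₀ := (Finset.univ.filter (fun i => w i ≤ t)).max' hne with hi₀
    have hi₀mem : w i₀ ≤ t := by
      have h := Finset.max'_mem _ hne
      simp only [Finset.mem_filter] at h
      exact h.2
    have hSeq : {i | w i ≤ t} = Set.Iic i₀ := by
      ext i
      simp only [mem_setOf_eq, Set.mem_Iic]
      exact ⟨fun hi => Finset.le_max' _ _ (by simp [hi]), fun hi => le_trans (hw hi) hi₀mem⟩
    have hAeq : Finset.univ.filter (fun i => w i ≤ t) = Finset.Iic i₀ := by
      ext i
      simp only [Finset.mem_filter, Finset.mem_univ, true_and, Finset.mem_Iic]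
      exact ⟨fun hi => Finset.le_max' _ _ (by simp [hi]), fun hi => le_trans (hw hi) hi₀mem⟩
    have hsup : sSup ({0} ∪ m '' {i | w i ≤ t}) = m i₀ := by
      apply le_antisymm
      · apply csSup_le ⟨(0:ℝ), Set.mem_union_left _ (Set.mem_singleton 0)⟩
        rintro y hy
        simp only [Set.mem_union, Set.mem_singleton_iff, Set.mem_image, mem_setOf_eq] at hy
        rcases hy with rfl | ⟨i, hi, rfl⟩
        · exact hm0 i₀
        · have : i ≤ i₀ := by rw [← Set.mem_Iic, ← hSeq]; exact hi
          exact hm this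
      · apply le_csSup
        · exact ((Set.finite_singleton 0).union ((Set.toFinite _).image m)).bddAbove
        · exact Or.inr ⟨i₀, by rw [hSeq]; exact Set.mem_Iic.mpr le_rfl, rfl⟩
    rw [hsup, hAeq]
    have htel := tele_aux (Fin.cons 0 m) (by simp) i₀.1 i₀.2
    calc m i₀ = (Fin.cons (0:ℝ) m : Fin (n+1) → ℝ) (Fin.succ i₀) := by simp
      _ = ∑ i ∈ Finset.Iic i₀,
            ((Fin.cons (0:ℝ) m : Fin (n+1) → ℝ) i.succ
              - (Fin.cons (0:ℝ) m : Fin (n+1) → ℝ) i.castSucc) := by exact htel.symm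
      _ = ∑ i ∈ Finset.Iic i₀, (m i - (Fin.cons (0:ℝ) m : Fin (n+1) → ℝ) i.castSucc) :=
            Finset.sum_congr rfl fun i _ => by rw [Fin.cons_succ]
  · push_neg at hA
    have h1 : {i : Fin n | w i ≤ t} = ∅ := by
      ext i
      simp only [mem_setOf_eq, mem_empty_iff_false, iff_false, not_le]
      exact hA i
    have h2 : Finset.univ.filter (fun i : Fin n => w i ≤ t) = ∅ := by
      apply Finset.filter_false_of_mem
      intro i _
      exact not_le.mpr (hA i)
    rw [h1, h2, Set.image_empty, Set.union_empty, csSup_singleton, Finset.sum_empty]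

private lemma abel_aux {n : ℕ} (s : ℝ) (w m : Fin n → ℝ) :
    ∑ i : Fin n, (m i - (Fin.cons 0 m : Fin (n+1) → ℝ) i.castSucc) * (s - w i)
      = ∑ i : Fin n, m i * ((Fin.snoc w s : Fin (n+1) → ℝ) i.succ - w i) := by
  set A : Fin (n+1) → ℝ :=
    fun j => (Fin.cons 0 m : Fin (n+1) → ℝ) j * (s - (Fin.snoc w s : Fin (n+1) → ℝ) j) with hA
  have t1 : ∑ j : Fin (n+1), A j = ∑ i : Fin n, A i.castSucc + A (Fin.last n) :=
    Fin.sum_univ_castSucc A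
  have t2 : ∑ j : Fin (n+1), A j = A 0 + ∑ i : Fin n, A i.succ := Fin.sum_univ_succ A
  have hA0 : A 0 = 0 := by simp [hA]
  have hAl : A (Fin.last n) = 0 := by simp [hA]
  have key : ∑ i : Fin n, A i.castSucc = ∑ i : Fin n, A i.succ := by
    have h := t1.symm.trans t2
    rw [hA0, hAl] at h
    linarith
  have key2 : ∑ i : Fin n, (Fin.cons 0 m : Fin (n+1) → ℝ) i.castSucc * (s - w i)
      = ∑ i : Fin n, m i * (s - (Fin.snoc w s : Fin (n+1) → ℝ) i.succ) := by
    calc ∑ i : Fin n, (Fin.cons 0 m : Fin (n+1) → ℝ) i.castSucc * (s - w i)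
        = ∑ i : Fin n, A i.castSucc :=
          Finset.sum_congr rfl fun i _ => by simp [hA, Fin.snoc_castSucc]
      _ = ∑ i : Fin n, A i.succ := key
      _ = ∑ i : Fin n, m i * (s - (Fin.snoc w s : Fin (n+1) → ℝ) i.succ) :=
          Finset.sum_congr rfl fun i _ => by simp [hA, Fin.cons_succ]
  calc ∑ i : Fin n, (m i - (Fin.cons 0 m : Fin (n+1) → ℝ) i.castSucc) * (s - w i)
      = ∑ i : Fin n, (m i * (s - w i)
          - (Fin.cons 0 m : Fin (n+1) → ℝ) i.castSucc * (s - w i)) :=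
        Finset.sum_congr rfl fun i _ => by ring
    _ = ∑ i : Fin n, m i * (s - w i)
          - ∑ i : Fin n, (Fin.cons 0 m : Fin (n+1) → ℝ) i.castSucc * (s - w i) :=
        Finset.sum_sub_distrib _ _
    _ = ∑ i : Fin n, m i * (s - w i)
          - ∑ i : Fin n, m i * (s - (Fin.snoc w s : Fin (n+1) → ℝ) i.succ) := by rw [key2]
    _ = ∑ i : Fin n, (m i * (s - w i)
          - m i * (s - (Fin.snoc w s : Fin (n+1) → ℝ) i.succ)) := (Finset.sum_sub_distrib _ _).symm
    _ = ∑ i : Fin n, m i * ((Fin.snoc w s : Fin (n+1) → ℝ) i.succ - w i) :=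
        Finset.sum_congr rfl fun i _ => by ring

/-- if the CDF of an integrable random variable `X` dominates the
stairstep CDF `G_{x,ℓ}` everywhere, then `E[X]` is at most the mean of `G_{x,ℓ}`,
which equals the induced mean `s - ∑ ℓ_{(i)}(x_{(i+1)} - x_{(i)})`. -/
theorem stmt2 {n : ℕ} {Ω : Type*} [MeasurableSpace Ω] (μ : Measure Ω)
    [IsProbabilityMeasure μ] (s : ℝ) (x ℓ : Fin n → ℝ)
    (hx : ∀ i, x i ≤ s) (hℓ : ∀ i, ℓ i ∈ Set.Icc (0:ℝ) 1)
    (X : Ω → ℝ) (hXm : Measurable X) (hXi : Integrable X μ)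
    (hdom : ∀ t : ℝ, stairstep s x ℓ t ≤ (μ {ω | X ω ≤ t}).toReal) :
    ∫ ω, X ω ∂μ ≤ inducedMean s x ℓ := by
  classical
  have hw : Monotone (sortedVec x) := Tuple.monotone_sort x
  have hm : Monotone (sortedVec ℓ) := Tuple.monotone_sort ℓ
  have hws : ∀ i, sortedVec x i ≤ s := fun i => hx _
  have hm0 : ∀ i, (0:ℝ) ≤ sortedVec ℓ i := fun i => (hℓ _).1
  have hm1 : ∀ i, sortedVec ℓ i ≤ 1 := fun i => (hℓ _).2
  set d : Fin n → ℝ :=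
    fun i => sortedVec ℓ i - (Fin.cons 0 (sortedVec ℓ) : Fin (n+1) → ℝ) i.castSucc with hd_def
  set Gs : ℝ → ℝ :=
    fun t => ∑ i : Fin n, (Ici (sortedVec x i)).indicator (fun _ => d i) t with hGs_def
  have hGeq : ∀ t, stairstep s x ℓ t = if s ≤ t then 1 else Gs t := by
    intro t
    unfold stairstep
    by_cases hst : s ≤ t
    · rw [if_pos hst, if_pos hst]
    · rw [if_neg hst, if_neg hst]
      simp only [hGs_def, hd_def]
      exact sup_eq_sum _ _ hw hm hm0 t
  have hGs_meas : Measurable Gs := by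
    rw [hGs_def]
    exact Finset.measurable_sum _ fun i _ => measurable_const.indicator measurableSet_Ici
  have hG_meas : Measurable (stairstep s x ℓ) := by
    rw [funext hGeq]
    exact Measurable.ite measurableSet_Ici measurable_const hGs_meas
  have hG0 : ∀ t, 0 ≤ stairstep s x ℓ t := by
    intro t
    unfold stairstep
    split
    · norm_num
    · exact le_csSup (((Set.finite_singleton 0).union ((Set.toFinite _).image _)).bddAbove)
        (Set.mem_union_left _ (Set.mem_singleton 0))
  have hG1 : ∀ t, stairstep s x ℓ t ≤ 1 := by
    intro t
    unfold stairstep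
    split
    · exact le_refl 1
    · apply csSup_le ⟨(0:ℝ), Set.mem_union_left _ (Set.mem_singleton 0)⟩
      rintro y hy
      simp only [Set.mem_union, Set.mem_singleton_iff, Set.mem_image, mem_setOf_eq] at hy
      rcases hy with rfl | ⟨i, _, rfl⟩
      · norm_num
      · exact hm1 i
  set c : ℝ := s - 1 - ∑ i : Fin n, |s - sortedVec x i| with hc_def
  have hsumabs : 0 ≤ ∑ i : Fin n, |s - sortedVec x i| :=
    Finset.sum_nonneg fun i _ => abs_nonneg _
  have hcs : c < s := by rw [hc_def]; linarith
  have hcw : ∀ i, c < sortedVec x i := by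
    intro i
    have h1 : |s - sortedVec x i| ≤ ∑ j : Fin n, |s - sortedVec x j| :=
      Finset.single_le_sum (f := fun j => |s - sortedVec x j|)
        (fun j _ => abs_nonneg _) (Finset.mem_univ i)
    have h2 : s - sortedVec x i ≤ |s - sortedVec x i| := le_abs_self _
    rw [hc_def]; linarith
  have hsurv : ∀ u : ℝ, (μ {ω | u < X ω}).toReal = 1 - (μ {ω | X ω ≤ u}).toReal := by
    intro u
    have hset : {ω | u < X ω} = {ω | X ω ≤ u}ᶜ := by ext ω; simp [not_le]
    have hms : MeasurableSet {ω | X ω ≤ u} := hXm measurableSet_Iic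
    rw [hset, measure_compl hms (measure_ne_top μ _), measure_univ,
      ENNReal.toReal_sub_of_le prob_le_one ENNReal.one_ne_top, ENNReal.toReal_one]
  set f : Ω → ℝ := fun ω => max (X ω - c) 0 with hf_def
  have hf_int : Integrable f μ := (hXi.sub (integrable_const c)).pos_part
  have hf_nn : 0 ≤ᵐ[μ] f := Filter.Eventually.of_forall fun ω => le_max_right _ _
  have hlayer : ∫ ω, f ω ∂μ = ∫ t in Ioi 0, (μ {a | t < f a}).toReal :=
    hf_int.integral_eq_integral_meas_lt hf_nn
  have hEX : ∫ ω, X ω ∂μ ≤ (∫ ω, f ω ∂μ) + c := by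
    have h1 : ∫ ω, X ω ∂μ ≤ ∫ ω, (f ω + c) ∂μ := by
      refine integral_mono hXi (hf_int.add (integrable_const c)) fun ω => ?_
      simp only [hf_def]
      have := le_max_left (X ω - c) 0
      linarith
    rwa [integral_add hf_int (integrable_const c), integral_const, probReal_univ,
      one_smul] at h1
  have hsetEq : ∀ t ∈ Ioi (0:ℝ), (μ {a | t < f a}).toReal = (μ {ω | c + t < X ω}).toReal := by
    intro t ht
    simp only [mem_Ioi] at ht
    have hEq : {a | t < f a} = {ω | c + t < X ω} := by
      ext ω
      simp only [hf_def, mem_setOf_eq, lt_max_iff]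
      constructor
      · rintro (h | h)
        · linarith
        · linarith
      · intro h; left; linarith
    rw [hEq]
  have hGtop : ∀ u, s ≤ u → stairstep s x ℓ u = 1 := by
    intro u hu; unfold stairstep; rw [if_pos hu]
  have hG_meas' : Measurable (fun t => stairstep s x ℓ (c + t)) :=
    hG_meas.comp (measurable_id'.const_add c)
  have hh_meas : Measurable (fun t => 1 - stairstep s x ℓ (c + t)) :=
    measurable_const.sub hG_meas'
  have hh_int : IntegrableOn (fun t => 1 - stairstep s x ℓ (c + t)) (Ioi 0) := by
    apply Integrable.mono' (g := (Ioc (0:ℝ) (s - c)).indicator (fun _ => (1:ℝ)))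
    · rw [integrable_indicator_iff measurableSet_Ioc]
      refine (integrableOn_const_iff).mpr (Or.inr ?_)
      rw [Measure.restrict_apply measurableSet_Ioc]
      exact lt_of_le_of_lt (measure_mono inter_subset_left) measure_Ioc_lt_top
    · exact hh_meas.aestronglyMeasurable
    · rw [ae_restrict_iff' measurableSet_Ioi]
      refine Filter.Eventually.of_forall fun t ht => ?_
      simp only [mem_Ioi] at ht
      by_cases hts : t ≤ s - c
      · have hmem : t ∈ Ioc (0:ℝ) (s - c) := ⟨ht, hts⟩
        rw [Set.indicator_of_mem hmem]
        rw [Real.norm_eq_abs, abs_le]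
        constructor
        · have := hG1 (c + t); linarith
        · have := hG0 (c + t); linarith
      · rw [hGtop _ (by linarith), sub_self, norm_zero]
        exact Set.indicator_nonneg (fun _ _ => zero_le_one) t
  have hIoc : ∫ t in Ioi (0:ℝ), (1 - stairstep s x ℓ (c + t))
      = ∫ t in Ioc (0:ℝ) (s - c), (1 - stairstep s x ℓ (c + t)) := by
    apply setIntegral_eq_of_subset_of_ae_diff_eq_zero nullMeasurableSet_Ioi Ioc_subset_Ioi_self
    refine Filter.Eventually.of_forall fun u hu => ?_
    simp only [mem_diff, mem_Ioi, mem_Ioc, not_and, not_le] at hu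
    have h3 : s - c < u := hu.2 hu.1
    rw [hGtop _ (by linarith), sub_self]
  have hGc_int : IntegrableOn (fun t => stairstep s x ℓ (c + t)) (Ioc 0 (s - c)) := by
    apply Integrable.mono' (g := fun _ => (1:ℝ))
    · exact (integrableOn_const_iff).mpr (Or.inr measure_Ioc_lt_top)
    · exact hG_meas'.aestronglyMeasurable
    · refine Filter.Eventually.of_forall fun t => ?_
      rw [Real.norm_eq_abs, abs_le]
      exact ⟨by linarith [hG0 (c + t)], hG1 (c + t)⟩
  have hsplit : ∫ t in Ioc (0:ℝ) (s - c), (1 - stairstep s x ℓ (c + t))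
      = (s - c) - ∫ t in Ioc (0:ℝ) (s - c), stairstep s x ℓ (c + t) := by
    rw [integral_sub ((integrableOn_const_iff (C := (1:ℝ))).mpr (Or.inr measure_Ioc_lt_top)) hGc_int]
    congr 1
    rw [setIntegral_const, smul_eq_mul, mul_one, Real.volume_real_Ioc_of_le (by linarith : (0:ℝ) ≤ s - c)]
    ring
  have hGval : ∫ t in Ioc (0:ℝ) (s - c), stairstep s x ℓ (c + t)
      = ∑ i : Fin n, d i * (s - sortedVec x i) := by
    rw [integral_Ioc_eq_integral_Ioo]
    have e1 : EqOn (fun t => stairstep s x ℓ (c + t))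
        (fun t => ∑ i : Fin n, (Ici (sortedVec x i - c)).indicator (fun _ => d i) t)
        (Ioo 0 (s - c)) := by
      intro t ht
      simp only [mem_Ioo] at ht
      show stairstep s x ℓ (c + t)
        = ∑ i : Fin n, (Ici (sortedVec x i - c)).indicator (fun _ => d i) t
      have hst : ¬ s ≤ c + t := by
        have := ht.2
        push_neg
        linarith
      rw [hGeq (c + t), if_neg hst]
      simp only [hGs_def]
      refine Finset.sum_congr rfl fun i _ => ?_
      have hiff : (sortedVec x i ≤ c + t) ↔ (sortedVec x i - c ≤ t) := by
        constructor <;> intro <;> linarith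
      simp only [Set.indicator_apply, Set.mem_Ici]
      rw [if_congr hiff rfl rfl]
    rw [setIntegral_congr_fun measurableSet_Ioo e1]
    rw [integral_finset_sum]
    · refine Finset.sum_congr rfl fun i _ => ?_
      rw [setIntegral_indicator measurableSet_Ici]
      have hseteq : Ioo (0:ℝ) (s - c) ∩ Ici (sortedVec x i - c)
          = Ico (sortedVec x i - c) (s - c) := by
        ext u
        simp only [mem_inter_iff, mem_Ioo, mem_Ici, mem_Ico]
        constructor
        · rintro ⟨⟨h1, h2⟩, h3⟩; exact ⟨h3, h2⟩
        · rintro ⟨h1, h2⟩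
          refine ⟨⟨?_, h2⟩, h1⟩
          have := hcw i; linarith
      rw [hseteq, setIntegral_const, smul_eq_mul, Real.volume_real_Ico_of_le (by linarith [hws i] : sortedVec x i - c ≤ s - c)]
      ring
    · intro i _
      rw [integrable_indicator_iff measurableSet_Ici]
      refine (integrableOn_const_iff).mpr (Or.inr ?_)
      rw [Measure.restrict_apply measurableSet_Ici]
      exact lt_of_le_of_lt (measure_mono inter_subset_right) measure_Ioo_lt_top
  have hfinal : c + ((s - c) - ∑ i : Fin n, d i * (s - sortedVec x i)) = inducedMean s x ℓ := by
    simp only [hd_def]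
    rw [abel_aux s (sortedVec x) (sortedVec ℓ)]
    unfold inducedMean
    ring
  have hmono2 : ∫ t in Ioi (0:ℝ), (μ {ω | c + t < X ω}).toReal
      ≤ ∫ t in Ioi (0:ℝ), (1 - stairstep s x ℓ (c + t)) := by
    apply integral_mono_of_nonneg
    · exact Filter.Eventually.of_forall fun t => ENNReal.toReal_nonneg
    · exact hh_int
    · refine Filter.Eventually.of_forall fun t => ?_
      dsimp only
      rw [hsurv (c + t)]
      have := hdom (c + t)
      linarith
  calc ∫ ω, X ω ∂μ ≤ (∫ ω, f ω ∂μ) + c := hEX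
    _ = (∫ t in Ioi (0:ℝ), (μ {ω | c + t < X ω}).toReal) + c := by
        rw [hlayer, setIntegral_congr_fun measurableSet_Ioi hsetEq]
    _ ≤ (∫ t in Ioi (0:ℝ), (1 - stairstep s x ℓ (c + t))) + c := by linarith [hmono2]
    _ = ((s - c) - ∑ i : Fin n, d i * (s - sortedVec x i)) + c := by
        rw [hIoc, hsplit, hGval]
    _ = inducedMean s x ℓ := by linarith [hfinal]
end

section
/- (Guaranteed coverage.) Let D ⊆ ℝ be nonempty with finite supremum s_D, and let ν be a Borel probability measure supported on D with finite mean μ. Let X = (X_1,…,X_n) be i.i.d. with law ν. Then for any function T : ℝⁿ → ℝ and any α ∈ (0,1): P( b^α_{D,T}(X) < μ ) ≤ α. -/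
open MeasureTheory Set

open ProbabilityTheory
open scoped ENNReal

namespace Helper

variable {n : ℕ}

lemma sortedVec_mono (x : Fin n → ℝ) : Monotone (sortedVec x) :=
  Tuple.monotone_sort x

lemma sortedVec_apply (x : Fin n → ℝ) (i : Fin n) :
    sortedVec x i = x (Tuple.sort x i) := rfl

lemma sortedVec_prop {P : ℝ → Prop} {x : Fin n → ℝ} (h : ∀ j, P (x j)) (i : Fin n) :
    P (sortedVec x i) := h _

lemma sortedVec_comp {f : ℝ → ℝ} (x : Fin n → ℝ)
    (hf : Monotone (f ∘ sortedVec x)) :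
    sortedVec (f ∘ x) = f ∘ sortedVec x := by
  have h := Tuple.unique_monotone (f := f ∘ x) (σ := Tuple.sort (f ∘ x))
    (τ := Tuple.sort x) (Tuple.monotone_sort (f ∘ x)) hf
  exact h

/-- if the i-th order statistic is ≤ y then there are i+1 coordinates ≤ y -/

lemma exists_finset_of_sortedVec_le {x : Fin n → ℝ} {i : Fin n} {y : ℝ}
    (h : sortedVec x i ≤ y) :
    ∃ S : Finset (Fin n), i.val + 1 ≤ S.card ∧ ∀ j ∈ S, x j ≤ y := by
  refine ⟨(Finset.Iic i).image (Tuple.sort x), ?_, ?_⟩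
  · rw [Finset.card_image_of_injective _ (Tuple.sort x).injective, Fin.card_Iic]
  · intro j hj
    obtain ⟨k, hk, rfl⟩ := Finset.mem_image.1 hj
    have : sortedVec x k ≤ sortedVec x i :=
      sortedVec_mono x (Finset.mem_Iic.1 hk)
    exact this.trans h

lemma sortedVec_le_of_finset {x : Fin n → ℝ} {i : Fin n} {y : ℝ}
    {S : Finset (Fin n)} (hcard : i.val + 1 ≤ S.card) (hS : ∀ j ∈ S, x j ≤ y) :
    sortedVec x i ≤ y := by
  classical
  set σ := Tuple.sort x
  set S' := S.image σ.symm with hS'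
  have hcard' : i.val + 1 ≤ S'.card := by
    rw [hS', Finset.card_image_of_injective _ σ.symm.injective]; exact hcard
  have : ∃ j ∈ S', i ≤ j := by
    by_contra hcon
    push_neg at hcon
    have hsub : S' ⊆ Finset.Iio i := fun j hj => Finset.mem_Iio.2 (hcon j hj)
    have := Finset.card_le_card hsub
    rw [Fin.card_Iio] at this
    omega
  obtain ⟨j, hj, hij⟩ := this
  obtain ⟨k, hk, rfl⟩ := Finset.mem_image.1 hj
  have h1 : sortedVec x i ≤ sortedVec x (σ.symm k) := sortedVec_mono x hij
  have h2 : sortedVec x (σ.symm k) = x k := by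
    rw [sortedVec_apply]; simp [σ]
  rw [h2] at h1
  exact h1.trans (hS k hk)

lemma sortedVec_le_add {a b : Fin n → ℝ} {ε : ℝ} (h : ∀ j, a j ≤ b j + ε) (i : Fin n) :
    sortedVec a i ≤ sortedVec b i + ε := by
  obtain ⟨S, hcard, hS⟩ := exists_finset_of_sortedVec_le (le_refl (sortedVec b i))
  exact sortedVec_le_of_finset hcard (fun j hj => (h j).trans (by linarith [hS j hj]))

lemma fin_telescope (q : Fin (n+1) → ℝ) :
    ∑ i : Fin n, (q i.succ - q i.castSucc) = q (Fin.last n) - q 0 := by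
  induction n with
  | zero => simp
  | succ m ih =>
      rw [Fin.sum_univ_castSucc]
      have h1 : ∀ i : Fin m, (q (Fin.castSucc i).succ - q (Fin.castSucc i).castSucc)
          = ((q ∘ Fin.castSucc) i.succ - (q ∘ Fin.castSucc) i.castSucc) := by
        intro i; rfl
      calc ∑ i : Fin m, (q (Fin.castSucc i).succ - q (Fin.castSucc i).castSucc)
          + (q (Fin.last m).succ - q (Fin.last m).castSucc)
      _ = ((q ∘ Fin.castSucc) (Fin.last m) - (q ∘ Fin.castSucc) 0)
          + (q (Fin.last m).succ - q (Fin.last m).castSucc) := by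
            rw [Finset.sum_congr rfl (fun i _ => h1 i), ih (q ∘ Fin.castSucc)]
      _ = q (Fin.last (m+1)) - q 0 := by
            simp only [Function.comp_apply]
            have : (Fin.last m).succ = Fin.last (m+1) := rfl
            rw [this]
            have : (Fin.castSucc (0 : Fin (m+1))) = (0 : Fin (m+2)) := rfl
            rw [this]
            ring

/-- snoc of sorted vector: successor bound -/

lemma sorted_snoc_le {z : Fin n → ℝ} {s : ℝ} (hz : ∀ i, z i ≤ s) (i : Fin n) :
    sortedVec z i ≤ (Fin.snoc (sortedVec z) s : Fin (n+1) → ℝ) i.succ := by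
  rcases Fin.lt_or_eq_of_le (Fin.le_last i.succ) with h | h
  · have hval : (i.val + 1) < n := by
      have := h
      simp only [Fin.lt_iff_val_lt_val, Fin.val_last, Fin.val_succ] at this
      omega
    have : i.succ = Fin.castSucc ⟨i.val + 1, hval⟩ := by
      apply Fin.ext; simp
    rw [this, Fin.snoc_castSucc]
    exact sortedVec_mono z (by simp [Fin.le_iff_val_le_val])
  · rw [h, Fin.snoc_last]
    exact sortedVec_prop (P := fun t => t ≤ s) hz i

lemma snoc_succ_le {a b : Fin n → ℝ} {s ε : ℝ} (hε : 0 ≤ ε) (h : ∀ j, b j ≤ a j + ε)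
    (i : Fin n) :
    (Fin.snoc b s : Fin (n+1) → ℝ) i.succ ≤ (Fin.snoc a s : Fin (n+1) → ℝ) i.succ + ε := by
  rcases Fin.lt_or_eq_of_le (Fin.le_last i.succ) with hlt | heq
  · have hval : (i.val + 1) < n := by
      simp only [Fin.lt_iff_val_lt_val, Fin.val_last, Fin.val_succ] at hlt
      omega
    have hcast : i.succ = Fin.castSucc ⟨i.val + 1, hval⟩ := by apply Fin.ext; simp
    rw [hcast, Fin.snoc_castSucc, Fin.snoc_castSucc]
    exact h _
  · rw [heq, Fin.snoc_last, Fin.snoc_last]; linarith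

lemma integral_le_inducedMean (ν : Measure ℝ) [IsProbabilityMeasure ν]
    (hint : Integrable id ν) {s : ℝ} (hs : ν (Iic s) = 1)
    {z u : Fin n → ℝ} (hz : ∀ i, z i ≤ s)
    (hu : ∀ i, sortedVec u i ≤ cdf ν (sortedVec z i)) :
    ∫ t, t ∂ν ≤ inducedMean s z u := by
  classical
  set g : Fin (n+1) → ℝ := Fin.snoc (sortedVec z) s with hg
  set Δ : Fin n → ℝ := fun i => g i.succ - sortedVec z i with hΔdef
  have hΔ : ∀ i, 0 ≤ Δ i := fun i => sub_nonneg.2 (sorted_snoc_le hz i)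
  -- step 1 : bound the sum by cdf-weighted sum
  have step1 : ∑ i : Fin n, sortedVec u i * Δ i
      ≤ ∑ i : Fin n, cdf ν (sortedVec z i) * Δ i :=
    Finset.sum_le_sum fun i _ => mul_le_mul_of_nonneg_right (hu i) (hΔ i)
  -- step 2 : the cdf-weighted sum is an integral
  have hind : ∀ i : Fin n, Integrable ((Iic (sortedVec z i)).indicator (fun _ => Δ i)) ν :=
    fun i => (integrable_const (Δ i)).indicator measurableSet_Iic
  have step2 : ∑ i : Fin n, cdf ν (sortedVec z i) * Δ i
      = ∫ t, (∑ i : Fin n, (Iic (sortedVec z i)).indicator (fun _ => Δ i) t) ∂ν := by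
    rw [integral_finset_sum _ (fun i _ => hind i)]
    refine Finset.sum_congr rfl fun i _ => ?_
    rw [integral_indicator_const (Δ i) measurableSet_Iic, cdf_eq_real]
    simp [mul_comm]
  -- step 3 : a.e. pointwise bound
  have haes : ∀ᵐ t ∂ν, t ≤ s := by
    rw [ae_iff]
    have : {t : ℝ | ¬ t ≤ s} = (Iic s)ᶜ := by ext t; simp
    rw [this, measure_compl measurableSet_Iic (measure_ne_top ν _), hs, measure_univ]
    simp
  have step3 : ∀ᵐ t ∂ν,
      (∑ i : Fin n, (Iic (sortedVec z i)).indicator (fun _ => Δ i) t) ≤ s - t := by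
    filter_upwards [haes] with t hts
    have hterm : ∀ i : Fin n, (Iic (sortedVec z i)).indicator (fun _ => Δ i) t
        ≤ (g i.succ ⊔ t) - (g i.castSucc ⊔ t) := by
      intro i
      have hgc : g i.castSucc = sortedVec z i := Fin.snoc_castSucc _ _ _
      by_cases ht : t ∈ Iic (sortedVec z i)
      · rw [indicator_of_mem ht]
        have h1 : t ≤ sortedVec z i := ht
        have h2 : sortedVec z i ≤ g i.succ := sorted_snoc_le hz i
        rw [hgc, sup_eq_left.2 (h1.trans h2), sup_eq_left.2 h1]
      · rw [indicator_of_notMem ht]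
        have h1 : g i.castSucc ⊔ t = t := sup_eq_right.2 (by rw [hgc]; exact (lt_of_not_ge (fun hc => ht hc)).le)
        rw [h1]
        simp [le_sup_right]
    calc (∑ i : Fin n, (Iic (sortedVec z i)).indicator (fun _ => Δ i) t)
        ≤ ∑ i : Fin n, ((g i.succ ⊔ t) - (g i.castSucc ⊔ t)) := Finset.sum_le_sum fun i _ => hterm i
      _ = (g (Fin.last n) ⊔ t) - (g 0 ⊔ t) := fin_telescope (fun j => g j ⊔ t)
      _ ≤ s - t := by
          have h1 : g (Fin.last n) = s := Fin.snoc_last _ _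
          have h2 : t ≤ g 0 ⊔ t := le_sup_right
          rw [h1, sup_eq_left.2 hts]
          linarith
  -- step 4 : integrate
  have hsum_int : Integrable (fun t => ∑ i : Fin n, (Iic (sortedVec z i)).indicator (fun _ => Δ i) t) ν :=
    integrable_finset_sum _ (fun i _ => hind i)
  have hconst_sub : Integrable (fun t => s - t) ν := (integrable_const s).sub hint
  have step4 : ∫ t, (∑ i : Fin n, (Iic (sortedVec z i)).indicator (fun _ => Δ i) t) ∂ν
      ≤ ∫ t, (s - t) ∂ν := integral_mono_ae hsum_int hconst_sub step3
  have step5 : ∫ t, (s - t) ∂ν = s - ∫ t, t ∂ν := by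
    have : ∫ t, (s - t) ∂ν = ∫ t, (s : ℝ) ∂ν - ∫ t, t ∂ν := integral_sub (integrable_const s) hint
    rw [this, integral_const, probReal_univ]
    simp
  have : ∑ i : Fin n, sortedVec u i * Δ i ≤ s - ∫ t, t ∂ν := by
    calc ∑ i : Fin n, sortedVec u i * Δ i ≤ _ := step1
      _ = _ := step2
      _ ≤ _ := step4
      _ = _ := step5
  rw [inducedMean]
  linarith

lemma inducedMean_le {s : ℝ} {z u : Fin n → ℝ} (hu : ∀ i, 0 ≤ u i) (hz : ∀ i, z i ≤ s) :
    inducedMean s z u ≤ s := by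
  rw [inducedMean]
  have : (0:ℝ) ≤ ∑ i : Fin n, sortedVec u i *
      ((Fin.snoc (sortedVec z) s : Fin (n+1) → ℝ) i.succ - sortedVec z i) := by
    refine Finset.sum_nonneg fun i _ => mul_nonneg ?_ (sub_nonneg.2 (sorted_snoc_le hz i))
    exact sortedVec_prop (P := fun t => 0 ≤ t) hu i
  linarith

lemma inducedMean_le_add {s : ℝ} {z z' u : Fin n → ℝ} {ε : ℝ} (hε : 0 ≤ ε)
    (hu0 : ∀ i, 0 ≤ u i) (hu1 : ∀ i, u i ≤ 1) (h : ∀ j, |z j - z' j| ≤ ε) :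
    inducedMean s z u ≤ inducedMean s z' u + 2 * n * ε := by
  have hz2 : ∀ j, z' j ≤ z j + ε := fun j => by
    have := abs_le.1 (h j); linarith [this.1]
  have hz1 : ∀ j, z j ≤ z' j + ε := fun j => by
    have := abs_le.1 (h j); linarith [this.2]
  have hs1 : ∀ i, sortedVec z' i ≤ sortedVec z i + ε := sortedVec_le_add hz2
  have hs2 : ∀ i, sortedVec z i ≤ sortedVec z' i + ε := sortedVec_le_add hz1
  have hsnoc : ∀ i : Fin n, (Fin.snoc (sortedVec z') s : Fin (n+1) → ℝ) i.succ
      ≤ (Fin.snoc (sortedVec z) s : Fin (n+1) → ℝ) i.succ + ε := snoc_succ_le hε hs1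
  rw [inducedMean, inducedMean]
  have key : ∑ i : Fin n, sortedVec u i *
        ((Fin.snoc (sortedVec z') s : Fin (n+1) → ℝ) i.succ - sortedVec z' i)
      ≤ (∑ i : Fin n, sortedVec u i *
        ((Fin.snoc (sortedVec z) s : Fin (n+1) → ℝ) i.succ - sortedVec z i)) + n * (2*ε) := by
    have : ∀ i : Fin n, sortedVec u i *
        ((Fin.snoc (sortedVec z') s : Fin (n+1) → ℝ) i.succ - sortedVec z' i)
        ≤ sortedVec u i *
        ((Fin.snoc (sortedVec z) s : Fin (n+1) → ℝ) i.succ - sortedVec z i) + 2*ε := by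
      intro i
      have hu0' : 0 ≤ sortedVec u i := sortedVec_prop (P := fun t => 0 ≤ t) hu0 i
      have hu1' : sortedVec u i ≤ 1 := sortedVec_prop (P := fun t => t ≤ 1) hu1 i
      have hdiff : ((Fin.snoc (sortedVec z') s : Fin (n+1) → ℝ) i.succ - sortedVec z' i)
          ≤ ((Fin.snoc (sortedVec z) s : Fin (n+1) → ℝ) i.succ - sortedVec z i) + 2*ε := by
        have := hsnoc i
        have := hs2 i
        linarith
      nlinarith [hdiff, hu0', hu1',
        mul_le_mul_of_nonneg_left hdiff hu0']
    calc ∑ i : Fin n, sortedVec u i *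
          ((Fin.snoc (sortedVec z') s : Fin (n+1) → ℝ) i.succ - sortedVec z' i)
        ≤ ∑ i : Fin n, (sortedVec u i *
          ((Fin.snoc (sortedVec z) s : Fin (n+1) → ℝ) i.succ - sortedVec z i) + 2*ε) :=
          Finset.sum_le_sum fun i _ => this i
      _ = _ := by rw [Finset.sum_add_distrib]; simp [Finset.card_univ, mul_comm]
  have h2 : (n : ℝ) * (2*ε) = 2 * n * ε := by ring
  linarith [key]



instance : IsProbabilityMeasure unif01 := by
  constructor
  rw [unif01, Measure.restrict_apply_univ, Real.volume_Icc]
  norm_num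

instance (n : ℕ) : IsProbabilityMeasure (unifPi n) := by
  rw [unifPi]; infer_instance

noncomputable def qf (ν : Measure ℝ) (w : ℝ) : ℝ :=
  if w ∈ Ioo (0:ℝ) 1 then sInf {t | w ≤ cdf ν t} else 0

variable {ν : Measure ℝ} [IsProbabilityMeasure ν]

lemma qf_set_nonempty' {w : ℝ} (hw : w < 1) : {t | w ≤ cdf ν t}.Nonempty := by
  have h : ∀ᶠ t in Filter.atTop, w < cdf ν t :=
    (tendsto_cdf_atTop ν).eventually (eventually_gt_nhds hw)
  obtain ⟨t, ht⟩ := h.exists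
  exact ⟨t, ht.le⟩

lemma qf_set_bddBelow {w : ℝ} (hw : 0 < w) : BddBelow {t | w ≤ cdf ν t} := by
  have h : ∀ᶠ t in Filter.atBot, cdf ν t < w :=
    (tendsto_cdf_atBot ν).eventually (eventually_lt_nhds hw)
  obtain ⟨t₀, ht₀⟩ := Filter.eventually_atBot.1 h
  refine ⟨t₀, fun t ht => ?_⟩
  by_contra hc
  push_neg at hc
  exact absurd ht (not_le.2 (ht₀ t hc.le))

lemma le_cdf_qf {w : ℝ} (hw : w ∈ Ioo (0:ℝ) 1) : w ≤ cdf ν (qf ν w) := by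
  rw [qf, if_pos hw]
  have hne := qf_set_nonempty' (ν := ν) hw.2
  have hbdd := qf_set_bddBelow (ν := ν) hw.1
  set a := sInf {t | w ≤ cdf ν t} with ha
  have hIoi : ∀ t ∈ Ioi a, w ≤ cdf ν t := by
    intro t hat
    obtain ⟨r, hrS, hrt⟩ := exists_lt_of_csInf_lt hne hat
    exact le_trans hrS (monotone_cdf ν hrt.le)
  have htend : Filter.Tendsto (cdf ν) (nhdsWithin a (Ioi a)) (nhds (cdf ν a)) :=
    ((cdf ν).right_continuous a).mono_left (nhdsWithin_mono a Ioi_subset_Ici_self)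
  exact ge_of_tendsto htend (eventually_nhdsWithin_of_forall hIoi)

lemma qf_le_iff {w t : ℝ} (hw : w ∈ Ioo (0:ℝ) 1) :
    qf ν w ≤ t ↔ w ≤ cdf ν t := by
  constructor
  · intro h
    exact (le_cdf_qf hw).trans (monotone_cdf ν h)
  · intro h
    rw [qf, if_pos hw]
    exact csInf_le (qf_set_bddBelow hw.1) h

lemma qf_monoOn {w w' : ℝ} (hw : w ∈ Ioo (0:ℝ) 1) (hw' : w' ∈ Ioo (0:ℝ) 1)
    (h : w ≤ w') : qf ν w ≤ qf ν w' := by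
  rw [qf_le_iff hw]
  exact h.trans (le_cdf_qf hw')

lemma qf_preimage_Iic (c : ℝ) :
    qf ν ⁻¹' Iic c =
      (Ioo (0:ℝ) 1 ∩ Iic (cdf ν c)) ∪ ((Ioo (0:ℝ) 1)ᶜ ∩ (if 0 ≤ c then univ else ∅)) := by
  ext w
  by_cases hw : w ∈ Ioo (0:ℝ) 1
  · simp only [mem_preimage, mem_Iic, mem_union, mem_inter_iff, hw, mem_compl_iff,
      not_true_eq_false, false_and, or_false, true_and]
    exact qf_le_iff hw
  · simp only [mem_preimage, mem_Iic, mem_union, mem_inter_iff, hw, false_and, false_or,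
      mem_compl_iff, not_false_eq_true, true_and, qf, if_neg hw]
    by_cases hc : 0 ≤ c <;> simp [hc]

lemma measurable_qf : Measurable (qf ν) := by
  apply measurable_of_Iic
  intro c
  rw [qf_preimage_Iic]
  refine MeasurableSet.union (measurableSet_Ioo.inter measurableSet_Iic) ?_
  exact measurableSet_Ioo.compl.inter (by by_cases hc : 0 ≤ c <;> simp [hc])

lemma map_qf : Measure.map (qf ν) unif01 = ν := by
  refine Measure.ext_of_Iic _ _ fun c => ?_
  rw [Measure.map_apply measurable_qf measurableSet_Iic, qf_preimage_Iic,
    unif01, Measure.restrict_apply]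
  swap
  · refine MeasurableSet.union (measurableSet_Ioo.inter measurableSet_Iic) ?_
    exact measurableSet_Ioo.compl.inter (by by_cases hc : 0 ≤ c <;> simp [hc])
  have hsplit : ((Ioo (0:ℝ) 1 ∩ Iic (cdf ν c)) ∪ ((Ioo (0:ℝ) 1)ᶜ ∩ (if 0 ≤ c then univ else ∅)))
      ∩ Icc (0:ℝ) 1
      = (Ioo (0:ℝ) 1 ∩ Iic (cdf ν c)) ∪ (((Ioo (0:ℝ) 1)ᶜ ∩ (if 0 ≤ c then univ else ∅)) ∩ Icc 0 1) := by
    rw [union_inter_distrib_right]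
    congr 1
    rw [inter_eq_left]
    exact (inter_subset_left).trans Ioo_subset_Icc_self
  rw [hsplit]
  have hbd : (((Ioo (0:ℝ) 1)ᶜ ∩ (if 0 ≤ c then univ else ∅)) ∩ Icc 0 1) ⊆ {0, 1} := by
    intro w hw
    obtain ⟨⟨hw1, _⟩, hw2⟩ := hw
    simp only [mem_compl_iff, mem_Ioo, not_and, not_lt] at hw1
    rcases eq_or_lt_of_le hw2.1 with h0 | h0
    · left; exact h0.symm
    · right; exact le_antisymm hw2.2 (hw1 h0)
  have hnull : volume (((Ioo (0:ℝ) 1)ᶜ ∩ (if 0 ≤ c then univ else ∅)) ∩ Icc 0 1) = 0 :=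
    measure_mono_null hbd ((Set.toFinite ({0,1} : Set ℝ)).measure_zero volume)
  have hone : volume ((Ioo (0:ℝ) 1 ∩ Iic (cdf ν c)) ∪ (((Ioo (0:ℝ) 1)ᶜ ∩ (if 0 ≤ c then univ else ∅)) ∩ Icc 0 1))
      = volume (Ioo (0:ℝ) 1 ∩ Iic (cdf ν c)) :=
    le_antisymm ((measure_union_le _ _).trans (by rw [hnull, add_zero]))
      (measure_mono subset_union_left)
  rw [hone]
  have hc0 : 0 ≤ cdf ν c := cdf_nonneg ν c
  have hc1 : cdf ν c ≤ 1 := cdf_le_one ν c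
  have : volume (Ioo (0:ℝ) 1 ∩ Iic (cdf ν c)) = ENNReal.ofReal (cdf ν c) := by
    rcases eq_or_lt_of_le hc1 with h1 | h1
    · have : Ioo (0:ℝ) 1 ∩ Iic (cdf ν c) = Ioo 0 1 := by
        rw [inter_eq_left]
        intro w hw
        have : w ≤ 1 := (mem_Ioo.1 hw).2.le
        rw [mem_Iic, h1]
        exact this
      rw [this, Real.volume_Ioo, ← h1]
      norm_num
    · have : Ioo (0:ℝ) 1 ∩ Iic (cdf ν c) = Ioc 0 (cdf ν c) := by
        ext w
        simp only [mem_inter_iff, mem_Ioo, mem_Iic, mem_Ioc]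
        constructor
        · rintro ⟨⟨h2, _⟩, h4⟩; exact ⟨h2, h4⟩
        · rintro ⟨h2, h3⟩; exact ⟨⟨h2, lt_of_le_of_lt h3 h1⟩, h3⟩
      rw [this, Real.volume_Ioc]
      norm_num
  rw [this, ofReal_cdf]

lemma map_qf_pi (n : ℕ) :
    Measure.map (fun (u : Fin n → ℝ) i => qf ν (u i)) (unifPi n)
      = Measure.pi (fun _ : Fin n => ν) := by
  exact (measurePreserving_pi (fun _ : Fin n => unif01) (fun _ => ν)
    (fun _ => ⟨measurable_qf, map_qf⟩)).map_eq


lemma exists_cofinal_seq {s : Set ℝ} (hs : s.Nonempty) :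
    ∃ v : ℕ → ℝ, (∀ k, v k ∈ s) ∧ ∀ a ∈ s, ∃ k, a ≤ v k := by
  by_cases hb : BddAbove s
  · by_cases hmem : sSup s ∈ s
    · exact ⟨fun _ => sSup s, fun _ => hmem, fun a ha => ⟨0, le_csSup hb ha⟩⟩
    · obtain ⟨u, hmono, htend, hmemu⟩ := exists_seq_tendsto_sSup hs hb
      refine ⟨u, hmemu, fun a ha => ?_⟩
      have hlt : a < sSup s := lt_of_le_of_ne (le_csSup hb ha) fun h => hmem (h ▸ ha)
      obtain ⟨k, hk⟩ := (htend.eventually (lt_mem_nhds hlt)).exists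
      exact ⟨k, hk.le⟩
  · rw [not_bddAbove_iff] at hb
    have h : ∀ k : ℕ, ∃ a, a ∈ s ∧ (k:ℝ) < a := by
      intro k; obtain ⟨a, ha, hka⟩ := hb k; exact ⟨a, ha, hka⟩
    choose v hv1 hv2 using h
    refine ⟨v, hv1, fun a ha => ?_⟩
    obtain ⟨k, hk⟩ := exists_nat_ge a
    exact ⟨k, hk.trans (hv2 k).le⟩

lemma stepA {n : ℕ} (D : Set ℝ) (hbdd : BddAbove D)
    (ν : Measure ℝ) [IsProbabilityMeasure ν] (hint : Integrable id ν)
    (hs1 : ν (Iic (sSup D)) = 1)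
    (T : (Fin n → ℝ) → ℝ) {α : ℝ} (hα : α ∈ Set.Ioo (0:ℝ) 1)
    (x : Fin n → ℝ) (hx : ∀ i, x i ∈ D)
    (hucb : ucb D T α x < ∫ t, t ∂ν) :
    Measure.pi (fun _ : Fin n => ν) (closure (SsetD D T x)) ≤ ENNReal.ofReal α := by
  classical
  by_contra hcon
  rw [not_le] at hcon
  set s : ℝ := sSup D with hsdef
  set μ : ℝ := ∫ t, t ∂ν with hμdef
  set νn : Measure (Fin n → ℝ) := Measure.pi (fun _ : Fin n => ν) with hνn
  set lam : Measure (Fin n → ℝ) := unifPi n with hlam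
  set Qn : (Fin n → ℝ) → (Fin n → ℝ) := fun u i => qf ν (u i) with hQn
  set C : Set (Fin n → ℝ) := closure (SsetD D T x) with hC
  set G₁ : Set (Fin n → ℝ) := univ.pi (fun _ : Fin n => Ioo (0:ℝ) 1) with hG₁
  have hDle : ∀ d ∈ D, d ≤ s := fun d hd => le_csSup hbdd hd
  have hxA : x ∈ SsetD D T x := ⟨hx, le_refl _⟩
  -- closure is inside the box (-∞, s]^n
  have hclosed_box : IsClosed {y : Fin n → ℝ | ∀ i, y i ≤ s} := by
    have hbox : {y : Fin n → ℝ | ∀ i, y i ≤ s} = ⋂ i, {y | y i ≤ s} := by ext; simp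
    rw [hbox]
    exact isClosed_iInter fun i => isClosed_le (continuous_apply i) continuous_const
  have hC_box : C ⊆ {y : Fin n → ℝ | ∀ i, y i ≤ s} :=
    closure_minimal (fun y hy i => hDle _ (hy.1 i)) hclosed_box
  -- measures of the good sets
  have hG₁meas : MeasurableSet G₁ := MeasurableSet.univ_pi fun _ => measurableSet_Ioo
  have hG₁full : lam G₁ = 1 := by
    rw [hlam, hG₁, unifPi, Measure.pi_pi]
    have : unif01 (Ioo (0:ℝ) 1) = 1 := by
      rw [unif01, Measure.restrict_apply measurableSet_Ioo,
        inter_eq_left.2 Ioo_subset_Icc_self, Real.volume_Ioo]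
      norm_num
    simp [this]
  have hCmeas : MeasurableSet C := isClosed_closure.measurableSet
  have hQnmeas : Measurable Qn :=
    measurable_pi_lambda _ fun i => measurable_qf.comp (measurable_pi_apply i)
  have hpre : lam (Qn ⁻¹' C) = νn C := by
    show unifPi n (Qn ⁻¹' C) = (Measure.pi fun _ : Fin n => ν) C
    rw [← map_qf_pi (ν := ν) n, Measure.map_apply hQnmeas hCmeas]
  set M : Set (Fin n → ℝ) := G₁ ∩ Qn ⁻¹' C with hM
  have hMmeas : MeasurableSet M := hG₁meas.inter (hQnmeas hCmeas)
  have hMlarge : νn C ≤ lam M := by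
    have hsub : Qn ⁻¹' C ⊆ M ∪ G₁ᶜ := by
      intro u hu
      by_cases hg : u ∈ G₁
      · exact Or.inl ⟨hg, hu⟩
      · exact Or.inr hg
    have hcompl : lam G₁ᶜ = 0 := by
      rw [measure_compl hG₁meas (measure_ne_top _ _), hG₁full, measure_univ]
      simp
    calc νn C = lam (Qn ⁻¹' C) := hpre.symm
      _ ≤ lam M + lam G₁ᶜ := le_trans (measure_mono hsub) (measure_union_le _ _)
      _ = lam M := by rw [hcompl, add_zero]
  -- pointwise bound on M
  have hpoint : ∀ u ∈ M, μ ≤ bfun D T x u := by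
    rintro u ⟨huG, huC⟩
    have hu01 : ∀ i, u i ∈ Ioo (0:ℝ) 1 := fun i => huG i (mem_univ i)
    set z : Fin n → ℝ := Qn u with hz
    have hzC : z ∈ C := huC
    have hz_le : ∀ i, z i ≤ s := fun i => hC_box hzC i
    have hsorted_u01 : ∀ i, sortedVec u i ∈ Ioo (0:ℝ) 1 :=
      fun i => sortedVec_prop (P := fun t => t ∈ Ioo (0:ℝ) 1) hu01 i
    have hsorted_z : sortedVec z = fun i => qf ν (sortedVec u i) := by
      have hmono : Monotone (qf ν ∘ sortedVec u) := by
        intro i j hij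
        exact qf_monoOn (hsorted_u01 i) (hsorted_u01 j) (sortedVec_mono u hij)
      have := sortedVec_comp (f := qf ν) u hmono
      exact this
    have hcond : ∀ i, sortedVec u i ≤ cdf ν (sortedVec z i) := by
      intro i
      rw [hsorted_z]
      exact le_cdf_qf (hsorted_u01 i)
    have hmean : μ ≤ inducedMean s z u :=
      integral_le_inducedMean ν hint hs1 hz_le hcond
    -- z is in the closure of SsetD, approximate
    have hle_bfun : inducedMean s z u ≤ bfun D T x u := by
      have hu0 : ∀ i, 0 ≤ u i := fun i => (hu01 i).1.le
      have hu1 : ∀ i, u i ≤ 1 := fun i => (hu01 i).2.le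
      have hbdd_im : BddAbove ((fun z' => inducedMean s z' u) '' SsetD D T x) := by
        refine ⟨s, fun y hy => ?_⟩
        obtain ⟨z', hz', rfl⟩ := hy
        exact inducedMean_le hu0 (fun i => hDle _ (hz'.1 i))
      refine le_of_forall_pos_le_add fun ε hε => ?_
      set ε' : ℝ := ε / (2*n+1) with hε'
      have hpos : (0:ℝ) < 2*n+1 := by positivity
      have hε'pos : 0 < ε' := by positivity
      obtain ⟨z', hz'A, hdist⟩ := Metric.mem_closure_iff.1 hzC ε' hε'pos
      have hcoord : ∀ j, |z j - z' j| ≤ ε' := by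
        intro j
        have := dist_le_pi_dist z z' j
        rw [Real.dist_eq] at this
        exact this.trans hdist.le
      have h1 : inducedMean s z u ≤ inducedMean s z' u + 2*n*ε' :=
        inducedMean_le_add hε'pos.le hu0 hu1 hcoord
      have h2 : inducedMean s z' u ≤ bfun D T x u :=
        le_csSup hbdd_im (mem_image_of_mem _ hz'A)
      have h3 : 2*(n:ℝ)*ε' ≤ ε := by
        have hh : ε' * (2*(n:ℝ)+1) = ε := div_mul_cancel₀ ε (ne_of_gt hpos)
        nlinarith [hε'pos.le]
      linarith
    linarith
  -- quantile argument
  have hSq : ∀ y : ℝ, y < μ → ¬ (ENNReal.ofReal (1-α) ≤ lam {u | bfun D T x u ≤ y}) := by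
    intro y hy hge
    have hsub : {u | bfun D T x u ≤ y} ⊆ Mᶜ := by
      intro u hu hM'
      have := hpoint u hM'
      have : bfun D T x u ≤ y := hu
      linarith [hpoint u hM']
    have hle : lam {u | bfun D T x u ≤ y} ≤ 1 - lam M := by
      have hcompl : lam Mᶜ = 1 - lam M := by
        rw [measure_compl hMmeas (measure_ne_top _ _), measure_univ]
      rw [← hcompl]
      exact measure_mono hsub
    have h2 : ENNReal.ofReal (1-α) ≤ 1 - lam M := le_trans hge hle
    have h3 : lam M + ENNReal.ofReal (1-α) ≤ 1 := by
      calc lam M + ENNReal.ofReal (1-α) ≤ lam M + (1 - lam M) := add_le_add_right h2 _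
        _ = 1 := by
            rw [add_comm, tsub_add_cancel_of_le (prob_le_one)]
    have h4 : lam M ≤ 1 - ENNReal.ofReal (1-α) :=
      ENNReal.le_sub_of_add_le_right ENNReal.ofReal_ne_top h3
    have h5 : (1:ℝ≥0∞) - ENNReal.ofReal (1-α) = ENNReal.ofReal α := by
      rw [← ENNReal.ofReal_one, ← ENNReal.ofReal_sub _ (by linarith [hα.2] : (0:ℝ) ≤ 1-α)]
      norm_num
    rw [h5] at h4
    have : ENNReal.ofReal α < lam M := lt_of_lt_of_le hcon hMlarge
    exact absurd h4 (not_le.2 this)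
  -- the quantile set is nonempty (contains s)
  have hs_mem : ENNReal.ofReal (1-α) ≤ lam {u | bfun D T x u ≤ s} := by
    have hsub : G₁ ⊆ {u | bfun D T x u ≤ s} := by
      intro u huG
      have hu0 : ∀ i, 0 ≤ u i := fun i => (huG i (mem_univ i)).1.le
      have hne : ((fun z' => inducedMean s z' u) '' SsetD D T x).Nonempty :=
        ⟨_, mem_image_of_mem _ hxA⟩
      refine csSup_le hne ?_
      rintro y ⟨z', hz', rfl⟩
      exact inducedMean_le hu0 (fun i => hDle _ (hz'.1 i))
    have h1 : ENNReal.ofReal (1-α) ≤ (1:ℝ≥0∞) := ENNReal.ofReal_le_one.2 (by linarith [hα.1])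
    refine h1.trans ?_
    rw [← hG₁full]
    exact measure_mono hsub
  have hquant : μ ≤ ucb D T α x := by
    have hdef : ucb D T α x
        = sInf {y : ℝ | ENNReal.ofReal (1-α) ≤ unifPi n {u | bfun D T x u ≤ y}} := rfl
    rw [hdef]
    refine le_csInf ⟨s, hs_mem⟩ ?_
    intro y hy
    by_contra hyc
    push_neg at hyc
    exact hSq y hyc hy
  linarith


end Helper

/-- Guaranteed coverage: for `X` an i.i.d. sample of size `n` from a
distribution `ν` supported on `D` (with `sup D` finite) with mean `μ`,
`P(b^α_{D,T}(X) < μ) ≤ α`. -/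
theorem stmt7 {n : ℕ} (D : Set ℝ) (hD : D.Nonempty) (hbdd : BddAbove D)
    (ν : Measure ℝ) [IsProbabilityMeasure ν] (hsupp : ∀ᵐ t ∂ν, t ∈ D)
    (hint : Integrable id ν) (μmean : ℝ) (hmean : μmean = ∫ t, t ∂ν)
    (T : (Fin n → ℝ) → ℝ) (α : ℝ) (hα : α ∈ Set.Ioo (0:ℝ) 1) :
    (Measure.pi fun _ : Fin n => ν) {x | ucb D T α x < μmean}
      ≤ ENNReal.ofReal α := by
  classical
  obtain ⟨B, hBsub, hBmeas, hBnull⟩ :=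
    exists_measurable_superset_of_null (ae_iff.1 hsupp)
  set D₀ : Set ℝ := Bᶜ with hD₀
  have hD₀meas : MeasurableSet D₀ := hBmeas.compl
  have hD₀sub : D₀ ⊆ D := fun t ht => by
    by_contra hc
    exact ht (hBsub hc)
  have hD₀full : ν D₀ = 1 := by
    rw [hD₀, measure_compl hBmeas (measure_ne_top _ _), hBnull, measure_univ, tsub_zero]
  have hs1 : ν (Iic (sSup D)) = 1 := by
    refine le_antisymm prob_le_one ?_
    rw [← hD₀full]
    exact measure_mono (fun t ht => le_csSup hbdd (hD₀sub ht))
  set νn : Measure (Fin n → ℝ) := Measure.pi fun _ : Fin n => ν with hνn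
  set G3 : Set (Fin n → ℝ) := univ.pi fun _ : Fin n => D₀ with hG3
  have hG3meas : MeasurableSet G3 := MeasurableSet.univ_pi fun _ => hD₀meas
  have hG3full : νn G3 = 1 := by
    rw [hνn, hG3, Measure.pi_pi]
    simp [hD₀full]
  have hG3c : νn G3ᶜ = 0 := by
    rw [measure_compl hG3meas (measure_ne_top _ _), hG3full, measure_univ, tsub_self]
  set E : Set (Fin n → ℝ) := {x | ucb D T α x < μmean} with hE
  have hstep : ∀ x ∈ E ∩ G3, νn (closure (SsetD D T x)) ≤ ENNReal.ofReal α := by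
    rintro x ⟨hxE, hxG⟩
    have hxD : ∀ i, x i ∈ D := fun i => hD₀sub (hxG i (mem_univ i))
    exact Helper.stepA D hbdd ν hint hs1 T hα x hxD (by rw [← hmean]; exact hxE)
  rcases (E ∩ G3).eq_empty_or_nonempty with hEG | hEG
  · have hsubc : E ⊆ G3ᶜ := fun x hx hxG =>
      (eq_empty_iff_forall_notMem.1 hEG x) ⟨hx, hxG⟩
    calc νn E ≤ νn G3ᶜ := measure_mono hsubc
      _ = 0 := hG3c
      _ ≤ _ := zero_le
  · obtain ⟨v, hvmem, hvcof⟩ := Helper.exists_cofinal_seq (hEG.image T)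
    have hchoice : ∀ k, ∃ x, x ∈ E ∩ G3 ∧ T x = v k := fun k => by
      obtain ⟨x, hx, hTx⟩ := hvmem k
      exact ⟨x, hx, hTx⟩
    choose xs hxs hTxs using hchoice
    have hcover : E ⊆ G3ᶜ ∪ ⋃ k, closure (SsetD D T (xs k)) := by
      intro x hxE'
      by_cases hxG : x ∈ G3
      · right
        have hxD : ∀ i, x i ∈ D := fun i => hD₀sub (hxG i (mem_univ i))
        obtain ⟨k, hk⟩ := hvcof (T x) (mem_image_of_mem T ⟨hxE', hxG⟩)
        refine mem_iUnion.2 ⟨k, subset_closure ⟨hxD, ?_⟩⟩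
        rw [hTxs k]
        exact hk
      · left; exact hxG
    have hdir : Directed (· ⊆ ·) (fun k => closure (SsetD D T (xs k))) := by
      intro k l
      rcases le_total (T (xs k)) (T (xs l)) with h | h
      · exact ⟨l, closure_mono (fun y hy => ⟨hy.1, hy.2.trans h⟩), subset_rfl⟩
      · exact ⟨k, subset_rfl, closure_mono (fun y hy => ⟨hy.1, hy.2.trans h⟩)⟩
    calc νn E ≤ νn (G3ᶜ ∪ ⋃ k, closure (SsetD D T (xs k))) := measure_mono hcover
      _ ≤ νn G3ᶜ + νn (⋃ k, closure (SsetD D T (xs k))) := measure_union_le _ _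
      _ = νn (⋃ k, closure (SsetD D T (xs k))) := by rw [hG3c, zero_add]
      _ = ⨆ k, νn (closure (SsetD D T (xs k))) := hdir.measure_iUnion
      _ ≤ ENNReal.ofReal α := iSup_le fun k => hstep (xs k) (hxs k)
end

section
/- Let s ∈ ℝ and let ν be a Borel probability measure on (−∞, s] with finite mean μ and CDF F. Let X = (X_1,…,X_n) be i.i.d. with law ν, let ℓ ∈ [0,1]ⁿ, and let α ∈ (0,1). If P( F(t) ≥ G_{X,ℓ}(t) for all t ∈ ℝ ) ≥ 1 − α, then P( m(X,ℓ) ≥ μ ) ≥ 1 − α, where m(X,ℓ) := s − Σ_{i=1}^n ℓ_{(i)}(X_{(i+1)} − X_{(i)}) with X_{(1)} ≤ … ≤ X_{(n)} the order statistics of X and X_{(n+1)} := s. -/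
open MeasureTheory Set

lemma tail_repr (s : ℝ) (ν : Measure ℝ) [IsProbabilityMeasure ν]
    (hsupp : ∀ᵐ t ∂ν, t ≤ s) (hint : Integrable id ν) :
    IntegrableOn (fun u => (ν (Iic (s - u))).toReal) (Ioi (0:ℝ)) ∧
    ∫ u in Ioi (0:ℝ), (ν (Iic (s - u))).toReal = s - ∫ t, t ∂ν := by
  have g_int : Integrable (fun t => s - t) ν := (integrable_const s).sub hint
  have g_nn : 0 ≤ᵐ[ν] fun t => s - t := hsupp.mono fun t ht => by simp; linarith
  have hset : ∀ u : ℝ, {a : ℝ | u ≤ s - a} = Iic (s - u) := fun u => by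
    ext a; simp only [mem_setOf_eq, mem_Iic]; constructor <;> intro <;> linarith
  have heq := g_int.integral_eq_integral_meas_le g_nn
  simp_rw [hset] at heq
  have hlhs : ∫ t, (s - t) ∂ν = s - ∫ t, t ∂ν := by
    rw [show (fun t : ℝ => s - t) = (fun t : ℝ => s - id t) from rfl]
    rw [integral_sub (integrable_const s) hint, integral_const]
    simp
  constructor
  · have hmeas : Measurable (fun u : ℝ => ν (Iic (s - u))) := by
      apply Antitone.measurable
      intro u v huv
      exact measure_mono (Iic_subset_Iic.mpr (by linarith))
    have hfin : ∫⁻ u in Ioi (0:ℝ), ν (Iic (s - u)) ≠ ⊤ := by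
      have key := lintegral_eq_lintegral_meas_lt ν g_nn g_int.aemeasurable
      have hlt : ∫⁻ t in Ioi (0:ℝ), ν {a | t < s - a} ≠ ⊤ := by
        rw [← key]; exact g_int.lintegral_lt_top.ne
      have hae := meas_le_ae_eq_meas_lt ν (volume.restrict (Ioi (0:ℝ))) (fun t => s - t)
      have : (fun u : ℝ => ν (Iic (s - u))) = fun u => ν {a | u ≤ s - a} :=
        funext fun u => by rw [hset]
      rw [this, lintegral_congr_ae hae]
      exact hlt
    exact integrable_toReal_of_lintegral_ne_top hmeas.aemeasurable hfin
  · simp only [measureReal_def] at heq; rw [← heq, hlhs]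

lemma sum_le_integral {n : ℕ} (s : ℝ) (ν : Measure ℝ) [IsProbabilityMeasure ν]
    (x ℓ : Fin n → ℝ) (hx : ∀ i, x i ≤ s) (hℓ : ∀ i, ℓ i ∈ Set.Icc (0:ℝ) 1)
    (hG : ∀ t, stairstep s x ℓ t ≤ (ν (Iic t)).toReal)
    (hInt : IntegrableOn (fun u => (ν (Iic (s - u))).toReal) (Ioi (0:ℝ))) :
    ∑ i : Fin n, sortedVec ℓ i *
        ((Fin.snoc (sortedVec x) s : Fin (n+1) → ℝ) i.succ - sortedVec x i)
      ≤ ∫ u in Ioi (0:ℝ), (ν (Iic (s - u))).toReal := by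
  classical
  set f : ℝ → ℝ := fun u => (ν (Iic (s - u))).toReal with hf
  set w : Fin (n+1) → ℝ := Fin.snoc (sortedVec x) s with hw
  have hxs : ∀ i : Fin n, sortedVec x i ≤ s := fun i => hx _
  have hws : ∀ k : Fin (n+1), w k ≤ s := by
    intro k
    rcases Fin.eq_castSucc_or_eq_last k with ⟨j, rfl⟩ | rfl
    · rw [hw, Fin.snoc_castSucc]; exact hxs j
    · rw [hw, Fin.snoc_last]
  have hwmono : Monotone w := by
    intro k l hkl
    rcases Fin.eq_castSucc_or_eq_last l with ⟨j, rfl⟩ | rfl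
    · rcases Fin.eq_castSucc_or_eq_last k with ⟨i, rfl⟩ | rfl
      · rw [hw, Fin.snoc_castSucc, Fin.snoc_castSucc]
        exact Tuple.monotone_sort x (Fin.castSucc_le_castSucc_iff.mp hkl)
      · exact absurd hkl (not_le.mpr (Fin.castSucc_lt_last j))
    · rw [hw, Fin.snoc_last]; exact hws k
  have hstep : ∀ i : Fin n, sortedVec x i ≤ w i.succ := by
    intro i
    have := hwmono (Fin.castSucc_lt_succ : i.castSucc < i.succ).le
    rwa [hw, Fin.snoc_castSucc] at this
  set T : Fin n → Set ℝ := fun i => Ioc (s - w i.succ) (s - sortedVec x i) with hT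
  have hTsub : ∀ i, T i ⊆ Ioi (0:ℝ) := by
    intro i u hu
    have h0 : (0:ℝ) ≤ s - w i.succ := by linarith [hws i.succ]
    exact lt_of_le_of_lt h0 hu.1
  have hfnn : ∀ u, 0 ≤ f u := fun u => ENNReal.toReal_nonneg
  have hterm : ∀ i : Fin n,
      sortedVec ℓ i * (w i.succ - sortedVec x i) ≤ ∫ u in T i, f u := by
    intro i
    have hlen : (0:ℝ) ≤ w i.succ - sortedVec x i := by linarith [hstep i]
    have hconst : ∫ _ in T i, sortedVec ℓ i = sortedVec ℓ i * (w i.succ - sortedVec x i) := by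
      rw [setIntegral_const, hT, measureReal_def, Real.volume_Ioc, ENNReal.toReal_ofReal (by linarith),
        smul_eq_mul]
      ring
    rw [← hconst]
    apply setIntegral_mono_on
    · exact integrableOn_const measure_Ioc_lt_top.ne
    · exact hInt.mono_set (hTsub i)
    · exact measurableSet_Ioc
    · intro u hu
      have hu1 : s - w i.succ < u := hu.1
      have hu2 : u ≤ s - sortedVec x i := hu.2
      have h0u : 0 < u := hTsub i hu
      have h1 : sortedVec x i ≤ s - u := by linarith
      have hGle := hG (s - u)
      refine le_trans ?_ hGle
      rw [stairstep, if_neg (by linarith : ¬ s ≤ s - u)]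
      apply le_csSup
      · refine ⟨1, ?_⟩
        rintro y (rfl | ⟨j, -, rfl⟩)
        · exact zero_le_one
        · exact (hℓ (Tuple.sort ℓ j)).2
      · exact Or.inr ⟨i, h1, rfl⟩
  have hdisj : ∀ i j : Fin n, i < j → Disjoint (T i) (T j) := by
    intro i j hij
    rw [hT]
    rw [Set.Ioc_disjoint_Ioc]
    have h1 : w i.succ ≤ sortedVec x j := by
      have := hwmono (Fin.succ_le_castSucc_iff.mpr hij)
      rwa [hw, Fin.snoc_castSucc] at this
    refine le_trans (min_le_right _ _) (le_trans (by linarith) (le_max_left _ _))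
  calc ∑ i : Fin n, sortedVec ℓ i * (w i.succ - sortedVec x i)
      ≤ ∑ i : Fin n, ∫ u in T i, f u := Finset.sum_le_sum fun i _ => hterm i
    _ = ∫ u in ⋃ i ∈ Finset.univ, T i, f u := by
        rw [integral_biUnion_finset]
        · intro i _; exact measurableSet_Ioc
        · intro i _ j _ hij
          rcases hij.lt_or_gt with h | h
          · exact hdisj i j h
          · exact (hdisj j i h).symm
        · intro i _; exact hInt.mono_set (hTsub i)
    _ ≤ ∫ u in Ioi (0:ℝ), f u := by
        apply setIntegral_mono_set hInt
        · exact Filter.Eventually.of_forall hfnn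
        · apply HasSubset.Subset.eventuallyLE
          intro u hu
          simp only [mem_iUnion] at hu
          obtain ⟨i, -, hi⟩ := hu
          exact hTsub i hi


/-- if `G_{X,ℓ}` is a `(1-α)` lower confidence bound for the CDF of
`ν` (supported on `(-∞, s]`, mean `μ`), then `P(m(X,ℓ) ≥ μ) ≥ 1 - α`. -/
theorem stmt8 {n : ℕ} (s : ℝ) (ν : Measure ℝ) [IsProbabilityMeasure ν]
    (hsupp : ∀ᵐ t ∂ν, t ≤ s) (hint : Integrable id ν)
    (μmean : ℝ) (hmean : μmean = ∫ t, t ∂ν)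
    (ℓ : Fin n → ℝ) (hℓ : ∀ i, ℓ i ∈ Set.Icc (0:ℝ) 1)
    (α : ℝ) (hα : α ∈ Set.Ioo (0:ℝ) 1)
    (hlcb : ENNReal.ofReal (1 - α)
      ≤ (Measure.pi fun _ : Fin n => ν)
          {x | ∀ t : ℝ, stairstep s x ℓ t ≤ (ν (Set.Iic t)).toReal}) :
    ENNReal.ofReal (1 - α)
      ≤ (Measure.pi fun _ : Fin n => ν) {x | μmean ≤ inducedMean s x ℓ} := by
  classical
  set P := Measure.pi fun _ : Fin n => ν with hP
  obtain ⟨hInt, hval⟩ := tail_repr s ν hsupp hint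
  set A : Set (Fin n → ℝ) := {x | ∀ t : ℝ, stairstep s x ℓ t ≤ (ν (Set.Iic t)).toReal} with hA
  set B : Set (Fin n → ℝ) := {x | ∀ i, x i ≤ s} with hB
  have hnull : P {x : Fin n → ℝ | ¬ ∀ i, x i ≤ s} = 0 := by
    have hsub : {x : Fin n → ℝ | ¬ ∀ i, x i ≤ s} ⊆ ⋃ i, Function.eval i ⁻¹' (Ioi s) := by
      intro x hx
      push_neg at hx
      obtain ⟨i, hi⟩ := hx
      exact mem_iUnion.mpr ⟨i, hi⟩
    refine measure_mono_null hsub (measure_iUnion_null fun i => ?_)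
    have hνs : ν (Ioi s) = 0 := by
      have := ae_iff.mp hsupp
      simpa [not_le, Ioi] using this
    rw [hP, Set.eval_preimage, Measure.pi_pi]
    exact Finset.prod_eq_zero (Finset.mem_univ i) (by simp [hνs])
  have hACsub : A ∩ B ⊆ {x | μmean ≤ inducedMean s x ℓ} := by
    rintro x ⟨hGx, hxs⟩
    have hsum := sum_le_integral s ν x ℓ hxs hℓ hGx hInt
    simp only [mem_setOf_eq, inducedMean]
    rw [hmean]
    linarith
  calc ENNReal.ofReal (1 - α) ≤ P A := hlcb
    _ ≤ P ((A ∩ B) ∪ {x : Fin n → ℝ | ¬ ∀ i, x i ≤ s}) := by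
        apply measure_mono
        intro x hx
        by_cases h : ∀ i, x i ≤ s
        · exact Or.inl ⟨hx, h⟩
        · exact Or.inr h
    _ ≤ P (A ∩ B) + P {x : Fin n → ℝ | ¬ ∀ i, x i ≤ s} := measure_union_le _ _
    _ = P (A ∩ B) := by rw [hnull, add_zero]
    _ ≤ P {x | μmean ≤ inducedMean s x ℓ} := measure_mono hACsub
end
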